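/- In the setting above, let a' < a be consecutive elements of ℤ^n in the order ≤ (i.e., there is no c ∈ ℤ^n with a' < c < a, restricting to elements in a fixed translate of C). Then there is a canonical isomorphism of graded R-modules F^a P / F^{a'} P ≅ T(P)_a ⊗_{R_0} R(-a), natural in P. In particular, this isomorphism does not depend on the choice of splitting σ: if σ and σ' are two degree-preserving splittings of P → T(P), then for x ∈ T(P)_a we have (σ - σ')(x) ∈ PR_+ ⊆ F^{a'} P. -/

import Mathlib

set_option maxHeartbeats 2000000
set_option synthInstance.maxHeartbeats 2000000


/-- A `ℤⁿ`-graded `R`-module `(P, 𝒬)` is *finitely generated graded projective* if it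
is a degree-preserving direct summand of a finite direct sum of shifted copies
`R(-bᵢ)` of `R` (where `R(-b)_a = R_{a-b}`). -/
def IsFGGradedProjective {n : ℕ} {R : Type*} [Ring R] (𝒜 : (Fin n → ℤ) → AddSubgroup R)
    {P : Type*} [AddCommGroup P] [Module R P] (𝒬 : (Fin n → ℤ) → AddSubgroup P) : Prop :=
  ∃ (m : ℕ) (b : Fin m → (Fin n → ℤ)) (s : P →ₗ[R] (Fin m → R)) (p : (Fin m → R) →ₗ[R] P),
    p.comp s = LinearMap.id ∧
    (∀ (a : Fin n → ℤ) (x : P), x ∈ 𝒬 a → ∀ i, s x i ∈ 𝒜 (a - b i)) ∧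
    (∀ (a : Fin n → ℤ) (y : Fin m → R), (∀ i, y i ∈ 𝒜 (a - b i)) → p y ∈ 𝒬 a)

/-- Let `a' < a` be consecutive elements of `ℤⁿ` (no `c` with
`a' < c < a` among degrees in the fixed translate `w + C` of the cone containing
the support of `P`).  Then there is a canonical isomorphism of graded `R`-modules
`F^a P / F^{a'} P ≅ T(P)_a ⊗_{R₀} R(-a)`, natural in `P`: for any degree-preserving
splitting `σ` of `π : P → T(P)` the `R`-span of `σ(T(P)_a)` lands in `F^a P`,
complements `F^{a'} P` inside `F^a P`, and is independent of `σ` modulo `F^{a'} P`;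
in particular if `σ, σ'` are two degree-preserving splittings then
`(σ - σ')(x) ∈ PR₊ ⊆ F^{a'} P` for `x ∈ T(P)_a`. -/
theorem consecutive_quotient_canonical (n ℓ : ℕ)
    (vgen : Fin ℓ → (Fin n → ℝ)) (C : Set (Fin n → ℝ))
    (hC : C = {x | ∃ c : Fin ℓ → ℝ, (∀ i, 0 ≤ c i) ∧ x = ∑ i, c i • vgen i})
    (γ : (Fin n → ℝ) →ₗ[ℝ] ℝ)
    (hnonneg : ∀ x ∈ C, 0 ≤ γ x)
    (hpointed : ∀ x ∈ C, γ x = 0 → x = 0)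
    (ι : (Fin n → ℤ) → (Fin n → ℝ)) (hι : ι = fun a i => (a i : ℝ))
    (hinj : Function.Injective (γ ∘ ι))
    -- the graded ring `R` with support in `C`
    (R : Type*) [Ring R] (𝒜 : (Fin n → ℤ) → AddSubgroup R) [GradedRing 𝒜]
    (hsupp : ∀ a, 𝒜 a ≠ ⊥ → ι a ∈ C)
    (Rplus : Ideal R)
    (hRplus : Rplus = Ideal.span (⋃ a ∈ {a : Fin n → ℤ | 0 < γ (ι a)}, (𝒜 a : Set R)))
    -- a finitely generated graded projective `R`-module `P`, support in `w + C`
    (P : Type*) [AddCommGroup P] [Module R P]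
    (𝒬 : (Fin n → ℤ) → AddSubgroup P)
    (hPinternal : DirectSum.IsInternal 𝒬)
    (hPsmul : ∀ (a b : Fin n → ℤ) (r : R) (x : P), r ∈ 𝒜 a → x ∈ 𝒬 b → r • x ∈ 𝒬 (a + b))
    (hPproj : IsFGGradedProjective 𝒜 𝒬)
    (w : Fin n → ℤ)
    (hPsupp : ∀ c : Fin n → ℤ, 𝒬 c ≠ ⊥ → ι c ∈ (ι w + ·) '' C)
    -- the projection `π : P → T(P) = P/PR₊`
    (π : P →ₗ[R] (P ⧸ (Rplus • (⊤ : Submodule R P))))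
    (hπ : π = (Rplus • (⊤ : Submodule R P)).mkQ)
    -- the filtration `F^a P`
    (F : (Fin n → ℤ) → Submodule R P)
    (hF : F = fun a => Submodule.span R
      (⋃ d ∈ {d : Fin n → ℤ | γ (ι d) ≤ γ (ι a)}, (𝒬 d : Set P)))
    -- consecutive degrees `a' < a` in the translate `w + C`
    (a' a : Fin n → ℤ)
    (ha' : ι a' ∈ (ι w + ·) '' C) (ha : ι a ∈ (ι w + ·) '' C)
    (hlt : γ (ι a') < γ (ι a))
    (hconsec : ∀ c : Fin n → ℤ, ι c ∈ (ι w + ·) '' C →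
      ¬(γ (ι a') < γ (ι c) ∧ γ (ι c) < γ (ι a))) :
    -- independence of the splitting: `(σ - σ')(x) ∈ PR₊ ⊆ F^{a'} P` for `x ∈ T(P)_a`
    (∀ σ σ' : (P ⧸ (Rplus • (⊤ : Submodule R P))) →+ P,
      (∀ t, π (σ t) = t) → (∀ r ∈ 𝒜 0, ∀ t, σ (r • t) = r • σ t) →
      (∀ (b : Fin n → ℤ) (x : P), x ∈ 𝒬 b → σ (π x) ∈ 𝒬 b) →
      (∀ t, π (σ' t) = t) → (∀ r ∈ 𝒜 0, ∀ t, σ' (r • t) = r • σ' t) →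
      (∀ (b : Fin n → ℤ) (x : P), x ∈ 𝒬 b → σ' (π x) ∈ 𝒬 b) →
      ∀ x ∈ 𝒬 a, σ (π x) - σ' (π x) ∈ Rplus • (⊤ : Submodule R P) ∧
        σ (π x) - σ' (π x) ∈ F a') ∧
    -- canonical isomorphism `F^a P / F^{a'} P ≅ T(P)_a ⊗_{R₀} R(-a)`:
    -- for any degree-preserving splitting `σ`, the summand `span R (σ(T(P)_a))`
    -- lies in `F^a P`, together with `F^{a'} P` it spans `F^a P`, and it meets
    -- `F^{a'} P` trivially
    (∀ σ : (P ⧸ (Rplus • (⊤ : Submodule R P))) →+ P,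
      (∀ t, π (σ t) = t) → (∀ r ∈ 𝒜 0, ∀ t, σ (r • t) = r • σ t) →
      (∀ (b : Fin n → ℤ) (x : P), x ∈ 𝒬 b → σ (π x) ∈ 𝒬 b) →
      (∀ x ∈ 𝒬 a, σ (π x) ∈ F a) ∧
      (F a = F a' ⊔ Submodule.span R {p : P | ∃ x ∈ 𝒬 a, p = σ (π x)}) ∧
      (Submodule.span R {p : P | ∃ x ∈ 𝒬 a, p = σ (π x)} ⊓ F a' = ⊥)) := by
  classical
  -- basic facts about the degree function `γ ∘ ι`
  have hιadd : ∀ x y : Fin n → ℤ, ι (x + y) = ι x + ι y := by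
    subst hι; intro x y; funext i; simp [Pi.add_apply]
  have hιzero : ι 0 = 0 := by
    subst hι; funext i; simp
  have hιsub : ∀ x y : Fin n → ℤ, ι (x - y) = ι x - ι y := by
    subst hι; intro x y; funext i; simp [Pi.sub_apply]
  have hgadd : ∀ x y : Fin n → ℤ, γ (ι (x + y)) = γ (ι x) + γ (ι y) := by
    intro x y; rw [hιadd, map_add]
  have hgzero : γ (ι 0) = 0 := by rw [hιzero, map_zero]
  have hgsub : ∀ x y : Fin n → ℤ, γ (ι (x - y)) = γ (ι x) - γ (ι y) := by
    intro x y; rw [hιsub, map_sub]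
  have hgeq : ∀ x y : Fin n → ℤ, γ (ι x) = γ (ι y) → x = y := by
    intro x y h; exact hinj h
  -- facts about the support of `R`
  have hA0 : ∀ (e : Fin n → ℤ) (r : R), r ∈ 𝒜 e → r ≠ 0 → 0 ≤ γ (ι e) := by
    intro e r hr hne
    refine hnonneg _ (hsupp e ?_)
    intro hbot; rw [hbot] at hr; exact hne (AddSubgroup.mem_bot.mp hr)
  have hAneg : ∀ (e : Fin n → ℤ) (r : R), r ∈ 𝒜 e → γ (ι e) < 0 → r = 0 := by
    intro e r hr hlt'
    by_contra hne
    exact absurd (hA0 e r hr hne) (not_le.mpr hlt')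
  have hRplusMem : ∀ (e : Fin n → ℤ) (r : R), r ∈ 𝒜 e → 0 < γ (ι e) → r ∈ Rplus := by
    intro e r hr he
    rw [hRplus]
    exact Ideal.subset_span (Set.mem_biUnion he hr)
  have hker : ∀ y : P, π y = 0 ↔ y ∈ Rplus • (⊤ : Submodule R P) := by
    intro y; rw [hπ, Submodule.mkQ_apply, Submodule.Quotient.mk_eq_zero]
  have hFdef : ∀ d : Fin n → ℤ, F d = Submodule.span R
      (⋃ e ∈ {e : Fin n → ℤ | γ (ι e) ≤ γ (ι d)}, (𝒬 e : Set P)) := by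
    intro d; rw [hF]
  have hFmem : ∀ (d c : Fin n → ℤ) (x : P), x ∈ 𝒬 c → γ (ι c) ≤ γ (ι d) → x ∈ F d := by
    intro d c x hx hle
    rw [hFdef d]
    exact Submodule.subset_span (Set.mem_biUnion hle hx)
  -- homogeneous decomposition of `Rplus`
  set S : Set R := ⋃ e ∈ {e : Fin n → ℤ | 0 < γ (ι e)}, (𝒜 e : Set R) with hS
  have hmulclosed : ∀ (c r : R), r ∈ AddSubgroup.closure S → c * r ∈ AddSubgroup.closure S := by
    intro c r hr
    induction hr using AddSubgroup.closure_induction with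
    | mem x hx =>
      obtain ⟨e, he, hxe⟩ := Set.mem_iUnion₂.mp hx
      have hc := DirectSum.sum_support_decompose 𝒜 c
      have : c * x = ∑ i ∈ (DirectSum.decompose 𝒜 c).support,
          (DirectSum.decompose 𝒜 c i : R) * x := by
        rw [← Finset.sum_mul, hc]
      rw [this]
      refine AddSubgroup.sum_mem _ ?_
      intro i _
      by_cases hz : (DirectSum.decompose 𝒜 c i : R) * x = 0
      · rw [hz]; exact AddSubgroup.zero_mem _
      · have hine : (DirectSum.decompose 𝒜 c i : R) ≠ 0 := by
          intro h0; rw [h0, zero_mul] at hz; exact hz rfl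
        have hipos : 0 ≤ γ (ι i) := hA0 i _ (SetLike.coe_mem _) hine
        refine AddSubgroup.subset_closure ?_
        refine Set.mem_biUnion ?_ (SetLike.mul_mem_graded (SetLike.coe_mem _) hxe)
        have := hgadd i e
        have he' : 0 < γ (ι e) := he
        show 0 < γ (ι (i + e))
        rw [this]; linarith
    | zero => rw [mul_zero]; exact AddSubgroup.zero_mem _
    | add x y hx hy ihx ihy => rw [mul_add]; exact AddSubgroup.add_mem _ ihx ihy
    | neg x hx ih => rw [mul_neg]; exact AddSubgroup.neg_mem _ ih
  have hRplus_le : ∀ r ∈ Rplus, r ∈ AddSubgroup.closure S := by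
    intro r hr
    rw [hRplus] at hr
    induction hr using Submodule.span_induction with
    | mem x hx => exact AddSubgroup.subset_closure hx
    | zero => exact AddSubgroup.zero_mem _
    | add x y hx hy ihx ihy => exact AddSubgroup.add_mem _ ihx ihy
    | smul c x hx ih => rw [smul_eq_mul]; exact hmulclosed c x ih
  -- the projection onto the degree `a` component
  set_option synthInstance.maxHeartbeats 1000000 in
  obtain ⟨ee, hee⟩ : ∃ ee : DirectSum (Fin n → ℤ) (fun c => ↥(𝒬 c)) ≃+ P,
      ∀ q, ee q = DirectSum.coeAddMonoidHom 𝒬 q :=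
    ⟨AddEquiv.ofBijective _ hPinternal, fun _ => rfl⟩
  have hsymm_of : ∀ (c : Fin n → ℤ) (x : P) (hx : x ∈ 𝒬 c),
      ee.symm x = DirectSum.of (fun c => ↥(𝒬 c)) c ⟨x, hx⟩ := by
    intro c x hx
    apply ee.injective
    rw [AddEquiv.apply_symm_apply, hee, DirectSum.coeAddMonoidHom_of]
  have pr_self : ∀ (x : P) (hx : x ∈ 𝒬 a), ((ee.symm x) a : P) = x := by
    intro x hx
    rw [hsymm_of a x hx, DirectSum.of_eq_same]
  have pr_other : ∀ (c : Fin n → ℤ) (x : P), c ≠ a → x ∈ 𝒬 c → ((ee.symm x) a : P) = 0 := by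
    intro c x hc hx
    rw [hsymm_of c x hx, DirectSum.of_eq_of_ne _ _ _ (Ne.symm hc), ZeroMemClass.coe_zero]
  have pr_add : ∀ u v : P, ((ee.symm (u + v)) a : P) = ((ee.symm u) a : P) + ((ee.symm v) a : P) := by
    intro u v; rw [map_add]; rfl
  have pr_zero : ((ee.symm (0 : P)) a : P) = 0 := by rw [map_zero]; rfl
  have pr_neg : ∀ u : P, ((ee.symm (-u)) a : P) = -((ee.symm u) a : P) := by
    intro u; rw [map_neg]; rfl
  -- key: the degree-`a` component of a homogeneous product with positive shift lies in `F a'`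
  have hpr_gen : ∀ (e c : Fin n → ℤ) (r : R) (x : P), r ∈ 𝒜 e → 0 < γ (ι e) → x ∈ 𝒬 c →
      ((ee.symm (r • x)) a : P) ∈ F a' := by
    intro e c r x hre hepos hxc
    have hmem : r • x ∈ 𝒬 (e + c) := hPsmul e c r x hre hxc
    by_cases hec : e + c = a
    · rw [pr_self _ (hec ▸ hmem)]
      by_cases h0 : r • x = 0
      · rw [h0]; exact Submodule.zero_mem _
      · have hx0 : x ≠ 0 := by rintro rfl; exact h0 (smul_zero r)
        have hQc : 𝒬 c ≠ ⊥ := by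
          intro hb; rw [hb] at hxc; exact hx0 (AddSubgroup.mem_bot.mp hxc)
        have hcw := hPsupp c hQc
        have hlt2 : γ (ι c) < γ (ι a) := by
          have h := hgadd e c; rw [hec] at h; linarith
        have hle : γ (ι c) ≤ γ (ι a') := by
          by_contra hgt
          push_neg at hgt
          exact hconsec c hcw ⟨hgt, hlt2⟩
        exact Submodule.smul_mem _ r (hFmem a' c x hxc hle)
    · rw [pr_other _ _ hec hmem]; exact Submodule.zero_mem _
  have hpr_plus : ∀ y ∈ Rplus • (⊤ : Submodule R P), ((ee.symm y) a : P) ∈ F a' := by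
    have main : ∀ r (_ : r ∈ AddSubgroup.closure S) (q : DirectSum (Fin n → ℤ) (fun c => ↥(𝒬 c))),
        ((ee.symm (r • ee q)) a : P) ∈ F a' := by
      intro r hr
      induction hr using AddSubgroup.closure_induction with
      | mem x hx =>
        intro q
        obtain ⟨e, he, hxe⟩ := Set.mem_iUnion₂.mp hx
        induction q using DirectSum.induction_on with
        | zero => rw [map_zero, smul_zero, pr_zero]; exact Submodule.zero_mem _
        | of c xc =>
          have hq : ee (DirectSum.of (fun c => ↥(𝒬 c)) c xc) = (xc : P) := by
            rw [hee, DirectSum.coeAddMonoidHom_of]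
          rw [hq]
          exact hpr_gen e c x (xc : P) hxe he (SetLike.coe_mem xc)
        | add q₁ q₂ ih₁ ih₂ =>
          rw [map_add, smul_add, pr_add]
          exact Submodule.add_mem _ ih₁ ih₂
      | zero => intro q; rw [zero_smul, pr_zero]; exact Submodule.zero_mem _
      | add x y hx hy ihx ihy =>
        intro q; rw [add_smul, pr_add]; exact Submodule.add_mem _ (ihx q) (ihy q)
      | neg x hx ih =>
        intro q; rw [neg_smul, pr_neg]; exact Submodule.neg_mem _ (ih q)
    intro y hy
    refine Submodule.smul_induction_on hy ?_ ?_
    · intro r hr nn _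
      have h := main r (hRplus_le r hr) (ee.symm nn)
      rwa [AddEquiv.apply_symm_apply] at h
    · intro u v hu hv; rw [pr_add]; exact Submodule.add_mem _ hu hv
  have hQRF : ∀ x : P, x ∈ 𝒬 a → x ∈ Rplus • (⊤ : Submodule R P) → x ∈ F a' := by
    intro x hxa hxp
    rw [← pr_self x hxa]
    exact hpr_plus x hxp
  constructor
  · -- Part 1: independence of the splitting
    intro σ σ' h1 h2 h3 h1' h2' h3' x hx
    have hd1 : σ (π x) - σ' (π x) ∈ Rplus • (⊤ : Submodule R P) := by
      rw [← hker]
      rw [map_sub, h1, h1', sub_self]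
    have hdQ : σ (π x) - σ' (π x) ∈ 𝒬 a := AddSubgroup.sub_mem _ (h3 a x hx) (h3' a x hx)
    exact ⟨hd1, hQRF _ hdQ hd1⟩
  · -- Part 2
    intro σ h1 h2 h3
    set N := Submodule.span R {p : P | ∃ x ∈ 𝒬 a, p = σ (π x)} with hN
    have hmemFa : ∀ x ∈ 𝒬 a, σ (π x) ∈ F a := fun x hx => hFmem a a _ (h3 a x hx) le_rfl
    refine ⟨hmemFa, ?_, ?_⟩
    · -- F a = F a' ⊔ N
      apply le_antisymm
      · rw [hFdef a]
        refine Submodule.span_le.mpr ?_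
        intro x hx
        obtain ⟨d, hd, hxd⟩ := Set.mem_iUnion₂.mp hx
        have hd' : γ (ι d) ≤ γ (ι a) := hd
        refine SetLike.mem_coe.mpr ?_
        by_cases hda' : γ (ι d) ≤ γ (ι a')
        · exact Submodule.mem_sup_left (hFmem a' d x hxd hda')
        · push_neg at hda'
          by_cases hx0 : x = 0
          · rw [hx0]; exact Submodule.zero_mem _
          · have hQd : 𝒬 d ≠ ⊥ := by
              intro hb; rw [hb] at hxd; exact hx0 (AddSubgroup.mem_bot.mp hxd)
            have hdw := hPsupp d hQd
            have hdeq : γ (ι d) = γ (ι a) := by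
              rcases lt_or_eq_of_le hd' with h | h
              · exact absurd ⟨hda', h⟩ (hconsec d hdw)
              · exact h
            have hda : d = a := hgeq d a hdeq
            rw [hda] at hxd
            have h1x : σ (π x) ∈ N := Submodule.subset_span ⟨x, hxd, rfl⟩
            have h2x : x - σ (π x) ∈ F a' := by
              refine hQRF _ (AddSubgroup.sub_mem _ hxd (h3 a x hxd)) ?_
              rw [← hker, map_sub, h1, sub_self]
            have hxsplit : x = (x - σ (π x)) + σ (π x) := by abel
            rw [hxsplit]
            exact Submodule.add_mem _ (Submodule.mem_sup_left h2x) (Submodule.mem_sup_right h1x)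
      · refine sup_le ?_ ?_
        · rw [hFdef a', hFdef a]
          refine Submodule.span_mono ?_
          refine Set.biUnion_subset_biUnion_left ?_
          intro d hd
          exact le_trans hd hlt.le
        · refine Submodule.span_le.mpr ?_
          rintro _ ⟨x, hx, rfl⟩
          exact SetLike.mem_coe.mpr (hmemFa x hx)
    · -- N ⊓ F a' = ⊥
      obtain ⟨m, bb, s, p, hps, hsdeg, hpdeg⟩ := hPproj
      have hps' : ∀ x : P, p (s x) = x := by
        intro x
        have := LinearMap.congr_fun hps x
        simpa using this
      set θ : P →ₗ[R] (Fin m → R) :=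
        { toFun := fun x i => if bb i = a then s x i else 0
          map_add' := by
            intro x y; funext i
            by_cases h : bb i = a <;> simp [h, map_add]
          map_smul' := by
            intro r x; funext i
            by_cases h : bb i = a <;> simp [h, map_smul] } with hθdef
      have hθ : ∀ (x : P) (i : Fin m), θ x i = if bb i = a then s x i else 0 := fun x i => rfl
      set η : (Fin m → R) →ₗ[R] P :=
        { toFun := fun y => ∑ i, y i • σ (π (p (Pi.single i 1)))
          map_add' := by
            intro x y
            simp [add_smul, Finset.sum_add_distrib]
          map_smul' := by
            intro r y
            simp [Finset.smul_sum, mul_smul] } with hηdef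
      have hη : ∀ y : Fin m → R, η y = ∑ i, y i • σ (π (p (Pi.single i 1))) := fun y => rfl
      have hpsingle : ∀ (i : Fin m) (c : R), p (Pi.single i c) = c • p (Pi.single i 1) := by
        intro i c
        rw [← map_smul]
        congr 1
        rw [← Pi.single_smul, smul_eq_mul, mul_one]
      have hθF : ∀ y ∈ F a', θ y = 0 := by
        have : F a' ≤ LinearMap.ker θ := by
          rw [hFdef a']
          refine Submodule.span_le.mpr ?_
          intro x hx
          obtain ⟨d, hd, hxd⟩ := Set.mem_iUnion₂.mp hx
          have hd' : γ (ι d) ≤ γ (ι a') := hd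
          refine SetLike.mem_coe.mpr (LinearMap.mem_ker.mpr ?_)
          funext i
          rw [hθ]
          by_cases h : bb i = a
          · rw [if_pos h]
            have hmem : s x i ∈ 𝒜 (d - bb i) := hsdeg d x hxd i
            rw [h] at hmem
            refine hAneg (d - a) _ hmem ?_
            rw [hgsub]
            linarith
          · rw [if_neg h]; rfl
        intro y hy
        exact LinearMap.mem_ker.mp (this hy)
      have hsplit : ∀ x ∈ 𝒬 a, η (θ (σ (π x))) = σ (π x) := by
        intro x hx
        set z := σ (π x) with hzdef
        have hz : z ∈ 𝒬 a := h3 a x hx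
        have hsz : ∀ i, s z i ∈ 𝒜 (a - bb i) := hsdeg a z hz
        have hstepA : π (p (θ z)) = π z := by
          have hkerpart : π (p (s z - θ z)) = 0 := by
            rw [hker]
            have hform : s z - θ z = ∑ i, Pi.single i ((s z - θ z) i) :=
              (Finset.univ_sum_single _).symm
            rw [hform, map_sum]
            refine Submodule.sum_mem _ ?_
            intro i _
            rw [hpsingle]
            by_cases hbi : bb i = a
            · have hzero : (s z - θ z) i = 0 := by
                simp [Pi.sub_apply, hθ, hbi]
              rw [hzero, zero_smul]; exact Submodule.zero_mem _
            · have hv : (s z - θ z) i = s z i := by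
                simp [Pi.sub_apply, hθ, hbi]
              rw [hv]
              by_cases h0 : s z i = 0
              · rw [h0, zero_smul]; exact Submodule.zero_mem _
              · have hmem : s z i ∈ 𝒜 (a - bb i) := hsz i
                have hpos : 0 < γ (ι (a - bb i)) := by
                  rcases (hA0 _ _ hmem h0).lt_or_eq with h | h
                  · exact h
                  · exfalso
                    have : a - bb i = 0 := by
                      refine hgeq _ _ ?_
                      rw [← h, hgzero]
                    exact hbi (sub_eq_zero.mp this).symm
                exact Submodule.smul_mem_smul (hRplusMem _ _ hmem hpos) Submodule.mem_top
          have hrw : θ z = s z - (s z - θ z) := by abel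
          rw [hrw, map_sub, map_sub, hkerpart, sub_zero, hps']
        have hstepB : η (θ z) = σ (π (p (θ z))) := by
          rw [hη]
          have hform : θ z = ∑ i, Pi.single i (θ z i) := (Finset.univ_sum_single _).symm
          conv_rhs => rw [hform, map_sum, map_sum, map_sum σ]
          refine Finset.sum_congr rfl ?_
          intro i _
          rw [hpsingle i (θ z i), map_smul π]
          by_cases hbi : bb i = a
          · have h0mem : θ z i ∈ 𝒜 0 := by
              rw [hθ, if_pos hbi]
              have := hsz i
              rwa [hbi, sub_self] at this
            exact (h2 (θ z i) h0mem _).symm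
          · have h0 : θ z i = 0 := by rw [hθ, if_neg hbi]
            rw [h0, zero_smul, zero_smul, map_zero]
        rw [hstepB, hstepA, hzdef, h1]
      have hN_fix : ∀ y ∈ N, η (θ y) = y := by
        intro y hy
        rw [hN] at hy
        induction hy using Submodule.span_induction with
        | mem x hxm =>
          obtain ⟨x0, hx0, hxe⟩ := hxm
          rw [hxe]
          exact hsplit x0 hx0
        | zero => simp
        | add x y hx hy ihx ihy => rw [map_add, map_add, ihx, ihy]
        | smul r x hx ih => rw [map_smul, map_smul, ih]
      refine (Submodule.eq_bot_iff _).mpr ?_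
      intro y hy
      obtain ⟨hyN, hyF⟩ := Submodule.mem_inf.mp hy
      rw [← hN_fix y hyN, hθF y hyF, map_zero]
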